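/- Forward direction of the hardness reduction: Let G = (V, E_G) be a connected graph with no universal vertex whose edges are covered by k cliques Q₁, …, Q_k, and let G' be obtained from G by adding a clique U of k new vertices joined completely to V. Then G' is the half-square of a balanced bisplit bipartite graph. Concretely, the bipartite graph B = (V ∪ U, W₁ ∪ W₂, E_B) with W₁ = {w₁, …, w_k}, W₂ = {w_v : v ∈ V}, all edges between U and W₁ ∪ W₂, the perfect matching {v w_v : v ∈ V}, and edges v w_i whenever v ∈ Q_i, satisfies G' = B²[V ∪ U]. -/

import Mathlib

/-- The half-square of a bipartite graph given by an incidence relation `E : X → Y → Prop`: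
two distinct vertices of `X` are adjacent iff they have a common neighbor in `Y`. -/
def halfSquare {X Y : Type*} (E : X → Y → Prop) : SimpleGraph X where
  Adj u v := u ≠ v ∧ ∃ y, E u y ∧ E v y
  symm := by
    refine ⟨?_⟩
    rintro u v ⟨h, y, hu, hv⟩
    exact ⟨h.symm, y, hv, hu⟩
  loopless := by
    refine ⟨?_⟩
    rintro u ⟨h, -⟩
    exact h rfl

/-- `C` is a maximal clique of `G`. -/
def MaximalClique {V : Type*} (G : SimpleGraph V) (C : Set V) : Prop :=
  G.IsClique C ∧ ∀ D, G.IsClique D → C ⊆ D → D = C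

/-- `G'` obtained from `G` by adding `k` new universal vertices: the new vertices form a
clique and are joined to all old vertices. -/
def addUniversal {V : Type*} (G : SimpleGraph V) (k : ℕ) : SimpleGraph (V ⊕ Fin k) where
  Adj a b := a ≠ b ∧ ∀ u v, a = Sum.inl u → b = Sum.inl v → G.Adj u v
  symm := by
    refine ⟨?_⟩
    rintro a b ⟨hab, h⟩
    exact ⟨hab.symm, fun u v hb ha => (h v u ha hb).symm⟩
  loopless := by
    refine ⟨?_⟩
    rintro a ⟨h, -⟩
    exact h rfl

/-- A bipartite graph (given by incidence relation `E : X → Y → Prop`) is balanced bisplit: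
`|X| = |Y|`, there is `X₁ ⊆ X` completely joined to `Y`, and the edges between
`X₂ = X \ X₁` and `Y₂ = Y \ Y₁` form a perfect matching of `X₂` onto `Y₂`. -/
def IsBalancedBisplit {X Y : Type*} [Fintype X] [Fintype Y] (E : X → Y → Prop) : Prop :=
  Fintype.card X = Fintype.card Y ∧
  ∃ (X₁ : Set X) (Y₁ : Set Y),
    (∀ x ∈ X₁, ∀ y, E x y) ∧
    ∃ f : {x // x ∉ X₁} → {y // y ∉ Y₁}, Function.Bijective f ∧
      ∀ (x : {x // x ∉ X₁}) (y : {y // y ∉ Y₁}), (E x.val y.val ↔ f x = y)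

/-- The incidence relation of the bipartite graph `B = (V ∪ U, W₁ ∪ W₂, E_B)` of the
reduction: all edges between `U = Fin k` and `W = W₁ ∪ W₂ = Fin k ⊕ V`, the perfect
matching `{v wᵥ : v ∈ V}`, and `v wᵢ` whenever `v ∈ Q i`. -/
def reductionRel {V : Type} (k : ℕ) (Q : Fin k → Set V) :
    (V ⊕ Fin k) → (Fin k ⊕ V) → Prop
  | Sum.inl v, Sum.inl i => v ∈ Q i
  | Sum.inl v, Sum.inr v' => v = v'
  | Sum.inr _, _ => True


private def redToV {V : Type} {k : ℕ} :
    {x : V ⊕ Fin k // x ∉ Set.range Sum.inr} → V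
  | ⟨Sum.inl v, _⟩ => v
  | ⟨Sum.inr i, h⟩ => absurd ⟨i, rfl⟩ h

private lemma redToV_spec {V : Type} {k : ℕ}
    (x : {x : V ⊕ Fin k // x ∉ Set.range Sum.inr}) :
    x.val = Sum.inl (redToV x) := by
  obtain ⟨(v | i), h⟩ := x
  · rfl
  · exact absurd ⟨i, rfl⟩ h

/-- Forward direction of the reduction: if the edges of a connected graph `G` with no
universal vertex are covered by `k` cliques `Q₁, …, Q_k`, then the bipartite graph
`B` of the reduction is balanced bisplit and `G' = B²[V ∪ U]`. -/
theorem stmt_3 {V : Type} [Fintype V] (G : SimpleGraph V) (k : ℕ)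
    (hconn : G.Connected)
    (huniv : ¬ ∃ v : V, ∀ u, u ≠ v → G.Adj v u)
    (Q : Fin k → Set V) (hQ : ∀ i, G.IsClique (Q i))
    (hcover : ∀ u v, G.Adj u v → ∃ i, u ∈ Q i ∧ v ∈ Q i) :
    IsBalancedBisplit (reductionRel k Q) ∧
    halfSquare (reductionRel k Q) = addUniversal G k := by
  constructor
  · refine ⟨by simp [Nat.add_comm], Set.range Sum.inr, Set.range Sum.inl, ?_, ?_⟩
    · rintro x ⟨i, rfl⟩ y; trivial
    · refine ⟨fun x => ⟨Sum.inr (redToV x), by simp⟩, ⟨?_, ?_⟩, ?_⟩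
      · intro x x' h
        have : redToV x = redToV x' := by
          simpa using congrArg Subtype.val h
        have := (redToV_spec x).trans (this ▸ (redToV_spec x').symm)
        exact Subtype.ext this
      · rintro ⟨(i | v), hy⟩
        · exact absurd ⟨i, rfl⟩ hy
        · exact ⟨⟨Sum.inl v, by simp⟩, rfl⟩
      · rintro x ⟨(i | v'), hy⟩
        · exact absurd ⟨i, rfl⟩ hy
        · rw [redToV_spec x]
          constructor
          · intro h
            exact Subtype.ext (by simpa [reductionRel] using h)
          · intro h
            have : redToV x = v' := by simpa using congrArg Subtype.val h
            simpa [reductionRel] using this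
  · ext a b
    constructor
    · rintro ⟨hab, y, ha, hb⟩
      refine ⟨hab, ?_⟩
      rintro u v rfl rfl
      rcases y with i | v'
      · exact (hQ i) ha hb (by simpa using hab)
      · exact absurd (ha.trans hb.symm : u = v) (by simpa using hab)
    · rintro ⟨hab, h⟩
      refine ⟨hab, ?_⟩
      rcases a with u | i
      · rcases b with v | j
        · obtain ⟨i, hu, hv⟩ := hcover u v (h u v rfl rfl)
          exact ⟨Sum.inl i, hu, hv⟩
        · exact ⟨Sum.inr u, rfl, trivial⟩
      · rcases b with v | j
        · exact ⟨Sum.inr v, trivial, rfl⟩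
        · exact ⟨Sum.inl i, trivial, trivial⟩
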